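/- arXiv:1605.06828 — 4 statements merged into one kernel-verified Lean document; each statement's English description precedes it below -/
import Mathlib

section
/- Let M be a finitely generated abelian group, S an M-graded integral domain with field of fractions 𝔽, and 𝔽⁰ the subfield of fractions f/g with f, g homogeneous of the same degree. If a ∈ S is a nonzero homogeneous element, then the subfield of 𝔽 generated by 𝔽⁰ and a equals the set of fractions f/g where f and g are sums of homogeneous components whose degrees all lie in the same coset of the subgroup ⟨deg a⟩ ⊆ M (with f and g having the same coset degree). -/
/-!
Statement 0 (Lemma on extending the degree-0 subfield by one homogeneous element).
M is a finitely generated abelian group, S an M-graded integral domain with fraction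
field 𝔽 = FractionRing S.  𝔽⁰ is the set of fractions f/g with f,g homogeneous of the
same degree.  For a subgroup M' ≤ M, `Fcoarse M'` is the set of fractions f/g where
f and g are sums of homogeneous components whose degrees lie in a common coset of M'
(with the same coset for f and g).  The claim: for a nonzero homogeneous element a of
degree d, the subfield generated by 𝔽⁰ and a equals `Fcoarse ⟨d⟩`.
-/

variable {M : Type*} [AddCommGroup M] [DecidableEq M]
variable {S : Type*} [CommRing S] [IsDomain S]

/-- The degree-0 subfield (as a set): fractions of homogeneous elements of equal degree. -/
def F0 (𝒜 : M → AddSubgroup S) : Set (FractionRing S) :=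
  {x | ∃ (m : M) (f g : S), f ∈ 𝒜 m ∧ g ∈ 𝒜 m ∧ g ≠ 0 ∧
    x = algebraMap S (FractionRing S) f / algebraMap S (FractionRing S) g}

/-- Elements of `S` that are sums of homogeneous components whose degrees all lie in
the coset `m + M'`. -/
def coarsePiece (𝒜 : M → AddSubgroup S) (M' : AddSubgroup M) (m : M) : AddSubgroup S :=
  ⨆ m' ∈ M', 𝒜 (m + m')

/-- The degree-0 subfield with respect to the coarser grading by `M ⧸ M'` (as a set):
fractions f/g with f, g sums of homogeneous components whose degrees lie in one common
coset of `M'`. -/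
def Fcoarse (𝒜 : M → AddSubgroup S) (M' : AddSubgroup M) : Set (FractionRing S) :=
  {x | ∃ (m : M) (f g : S), f ∈ coarsePiece 𝒜 M' m ∧ g ∈ coarsePiece 𝒜 M' m ∧ g ≠ 0 ∧
    x = algebraMap S (FractionRing S) f / algebraMap S (FractionRing S) g}

lemma coarsePiece_eq (𝒜 : M → AddSubgroup S) (M' : AddSubgroup M) (m : M) :
    coarsePiece 𝒜 M' m = ⨆ p : M', 𝒜 (m + (p : M)) := by
  rw [coarsePiece, iSup_subtype]

lemma mem_coarsePiece_of_mem (𝒜 : M → AddSubgroup S) (M' : AddSubgroup M) (m : M)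
    {m' : M} (hm' : m' ∈ M') {f : S} (hf : f ∈ 𝒜 (m + m')) :
    f ∈ coarsePiece 𝒜 M' m :=
  (le_iSup₂ (f := fun m' (_ : m' ∈ M') => 𝒜 (m + m')) m' hm') hf

lemma coarsePiece_mul (𝒜 : M → AddSubgroup S) [GradedRing 𝒜] (M' : AddSubgroup M)
    {m₁ m₂ : M} {f g : S} (hf : f ∈ coarsePiece 𝒜 M' m₁) (hg : g ∈ coarsePiece 𝒜 M' m₂) :
    f * g ∈ coarsePiece 𝒜 M' (m₁ + m₂) := by
  rw [coarsePiece_eq] at hf hg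
  induction hf using AddSubgroup.iSup_induction' with
  | hp p x hx =>
    induction hg using AddSubgroup.iSup_induction' with
    | hp q y hy =>
      refine mem_coarsePiece_of_mem 𝒜 M' _ (add_mem p.2 q.2) ?_
      have := SetLike.mul_mem_graded hx hy
      convert this using 2
      abel
    | h1 => simpa using zero_mem _
    | hadd y z _ _ hy hz => rw [mul_add]; exact add_mem hy hz
  | h1 => simpa using zero_mem _
  | hadd x y _ _ hx hy => rw [add_mul]; exact add_mem hx hy

lemma coarsePiece_decompose_eq_zero (𝒜 : M → AddSubgroup S) [GradedRing 𝒜] (M' : AddSubgroup M)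
    {m : M} {f : S} (hf : f ∈ coarsePiece 𝒜 M' m) (i : M) (hi : ∀ m' ∈ M', i ≠ m + m') :
    (DirectSum.decompose 𝒜 f i : S) = 0 := by
  rw [coarsePiece_eq] at hf
  induction hf using AddSubgroup.iSup_induction' with
  | hp p x hx => exact DirectSum.decompose_of_mem_ne 𝒜 hx fun h => hi (p : M) p.2 h.symm
  | h1 => simp
  | hadd x y _ _ hx hy => rw [DirectSum.decompose_add]; simp [hx, hy]

/-- The coarse subfield as a `Subfield`. -/
def FcoarseSubfield (𝒜 : M → AddSubgroup S) [GradedRing 𝒜] (M' : AddSubgroup M) :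
    Subfield (FractionRing S) where
  carrier := Fcoarse 𝒜 M'
  one_mem' := ⟨0, 1, 1, mem_coarsePiece_of_mem 𝒜 M' 0 M'.zero_mem
      (by simpa using SetLike.one_mem_graded 𝒜),
    mem_coarsePiece_of_mem 𝒜 M' 0 M'.zero_mem (by simpa using SetLike.one_mem_graded 𝒜),
    one_ne_zero, by simp⟩
  zero_mem' := ⟨0, 0, 1, zero_mem _,
    mem_coarsePiece_of_mem 𝒜 M' 0 M'.zero_mem (by simpa using SetLike.one_mem_graded 𝒜),
    one_ne_zero, by simp⟩
  mul_mem' := by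
    rintro x y ⟨m, f, g, hf, hg, hg0, rfl⟩ ⟨m', f', g', hf', hg', hg0', rfl⟩
    exact ⟨m + m', f * f', g * g', coarsePiece_mul 𝒜 M' hf hf',
      coarsePiece_mul 𝒜 M' hg hg', mul_ne_zero hg0 hg0',
      by rw [map_mul, map_mul, div_mul_div_comm]⟩
  add_mem' := by
    rintro x y ⟨m, f, g, hf, hg, hg0, rfl⟩ ⟨m', f', g', hf', hg', hg0', rfl⟩
    have inj := IsFractionRing.injective S (FractionRing S)
    have hgne : algebraMap S (FractionRing S) g ≠ 0 := by
      simpa [map_eq_zero_iff _ inj] using hg0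
    have hgne' : algebraMap S (FractionRing S) g' ≠ 0 := by
      simpa [map_eq_zero_iff _ inj] using hg0'
    refine ⟨m + m', f * g' + g * f', g * g',
      add_mem (coarsePiece_mul 𝒜 M' hf hg') (coarsePiece_mul 𝒜 M' hg hf'),
      coarsePiece_mul 𝒜 M' hg hg', mul_ne_zero hg0 hg0', ?_⟩
    rw [div_add_div _ _ hgne hgne', map_add, map_mul, map_mul, map_mul]
  neg_mem' := by
    rintro x ⟨m, f, g, hf, hg, hg0, rfl⟩
    exact ⟨m, -f, g, neg_mem hf, hg, hg0, by rw [map_neg, neg_div]⟩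
  inv_mem' := by
    rintro x ⟨m, f, g, hf, hg, hg0, rfl⟩
    by_cases hf0 : f = 0
    · refine ⟨0, 0, 1, zero_mem _,
        mem_coarsePiece_of_mem 𝒜 M' 0 M'.zero_mem (by simpa using SetLike.one_mem_graded 𝒜),
        one_ne_zero, ?_⟩
      simp [hf0]
    · exact ⟨m, g, f, hg, hf, hf0, by rw [inv_div]⟩

lemma key (𝒜 : M → AddSubgroup S) [GradedRing 𝒜] (d : M) (a : S) (ha : a ∈ 𝒜 d) (ha0 : a ≠ 0)
    {m : M} {f : S} (hf : f ∈ coarsePiece 𝒜 (AddSubgroup.closure {d}) m)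
    {k : ℤ} {g0 : S} (hg0 : g0 ∈ 𝒜 (m + k • d)) (hg00 : g0 ≠ 0) :
    algebraMap S (FractionRing S) f / algebraMap S (FractionRing S) g0 ∈
      Subfield.closure (F0 𝒜 ∪ {algebraMap S (FractionRing S) a}) := by
  set K := Subfield.closure (F0 𝒜 ∪ {algebraMap S (FractionRing S) a}) with hK
  have inj := IsFractionRing.injective S (FractionRing S)
  set φ := algebraMap S (FractionRing S) with hφ
  have hφa : φ a ∈ K := Subfield.subset_closure (Or.inr rfl)
  have hφa0 : φ a ≠ 0 := by simpa [map_eq_zero_iff _ inj] using ha0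
  have hφg0 : φ g0 ≠ 0 := by simpa [map_eq_zero_iff _ inj] using hg00
  rw [coarsePiece_eq] at hf
  induction hf using AddSubgroup.iSup_induction' with
  | h1 => simpa using zero_mem K
  | hadd x y _ _ hx hy => rw [map_add, add_div]; exact add_mem hx hy
  | hp p x hx =>
    obtain ⟨k', hk'⟩ := AddSubgroup.mem_closure_singleton.mp p.2
    rw [← hk'] at hx
    set n1 : ℕ := (k - k').toNat with hn1
    set n2 : ℕ := (k' - k).toNat with hn2
    have hdeg : (m + k' • d) + n1 • d = (m + k • d) + n2 • d := by
      rw [← natCast_zsmul d n1, ← natCast_zsmul d n2, add_assoc, add_assoc, ← add_zsmul,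
        ← add_zsmul]
      congr 2
      omega
    have hxa : x * a ^ n1 ∈ 𝒜 ((m + k • d) + n2 • d) := by
      rw [← hdeg]; exact SetLike.mul_mem_graded hx (SetLike.pow_mem_graded n1 ha)
    have hg0a : g0 * a ^ n2 ∈ 𝒜 ((m + k • d) + n2 • d) :=
      SetLike.mul_mem_graded hg0 (SetLike.pow_mem_graded n2 ha)
    have hg0a0 : g0 * a ^ n2 ≠ 0 := mul_ne_zero hg00 (pow_ne_zero _ ha0)
    have hu : φ (x * a ^ n1) / φ (g0 * a ^ n2) ∈ K :=
      Subfield.subset_closure (Or.inl ⟨_, _, _, hxa, hg0a, hg0a0, rfl⟩)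
    have heq : φ x / φ g0 =
        (φ (x * a ^ n1) / φ (g0 * a ^ n2)) * (φ a) ^ n2 / (φ a) ^ n1 := by
      rw [map_mul, map_mul, map_pow, map_pow]
      field_simp
    rw [heq]
    exact K.div_mem (K.mul_mem hu (K.pow_mem hφa n2)) (K.pow_mem hφa n1)

theorem stmt0 [AddGroup.FG M] (𝒜 : M → AddSubgroup S) [GradedRing 𝒜]
    (d : M) (a : S) (ha : a ∈ 𝒜 d) (ha0 : a ≠ 0) :
    (Subfield.closure (F0 𝒜 ∪ {algebraMap S (FractionRing S) a}) : Set (FractionRing S)) =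
      Fcoarse 𝒜 (AddSubgroup.closure {d}) := by
  set M' := AddSubgroup.closure ({d} : Set M) with hM'
  have inj := IsFractionRing.injective S (FractionRing S)
  set φ := algebraMap S (FractionRing S) with hφ
  apply Set.Subset.antisymm
  · -- closure ⊆ Fcoarse
    have : Subfield.closure (F0 𝒜 ∪ {φ a}) ≤ FcoarseSubfield 𝒜 M' := by
      rw [Subfield.closure_le]
      rintro x (⟨m, f, g, hf, hg, hg0, rfl⟩ | hx)
      · exact ⟨m, f, g,
          mem_coarsePiece_of_mem 𝒜 M' m M'.zero_mem (by simpa using hf),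
          mem_coarsePiece_of_mem 𝒜 M' m M'.zero_mem (by simpa using hg), hg0, rfl⟩
      · rw [Set.mem_singleton_iff] at hx
        subst hx
        refine ⟨0, a, 1,
          mem_coarsePiece_of_mem 𝒜 M' 0 (AddSubgroup.subset_closure rfl) (by simpa using ha),
          mem_coarsePiece_of_mem 𝒜 M' 0 M'.zero_mem (by simpa using SetLike.one_mem_graded 𝒜),
          one_ne_zero, by simp [hφ]⟩
    exact this
  · -- Fcoarse ⊆ closure
    rintro x ⟨m, f, g, hf, hg, hg0, rfl⟩
    have hφg : φ g ≠ 0 := by simpa [map_eq_zero_iff _ inj] using hg0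
    -- find a nonzero homogeneous component of g
    have hex : ∃ i, (DirectSum.decompose 𝒜 g i : S) ≠ 0 := by
      by_contra h
      push_neg at h
      apply hg0
      have : DirectSum.decompose 𝒜 g = 0 := by
        refine DFinsupp.ext fun i => ?_
        exact Subtype.ext (by simpa using h i)
      have := congrArg (DirectSum.decompose 𝒜).symm this
      simpa using this
    obtain ⟨i, hi⟩ := hex
    have hcoset : ∃ m' ∈ M', i = m + m' := by
      by_contra h
      push_neg at h
      exact hi (coarsePiece_decompose_eq_zero 𝒜 M' hg i h)
    obtain ⟨m', hm'M, him⟩ := hcoset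
    obtain ⟨k, hk⟩ := AddSubgroup.mem_closure_singleton.mp hm'M
    set g0 : S := (DirectSum.decompose 𝒜 g i : S) with hg0def
    have hg0mem : g0 ∈ 𝒜 (m + k • d) := by
      rw [hk, ← him]
      exact SetLike.coe_mem _
    have hφg0 : φ g0 ≠ 0 := by simpa [map_eq_zero_iff _ inj] using hi
    have h1 : φ f / φ g0 ∈ Subfield.closure (F0 𝒜 ∪ {φ a}) :=
      key 𝒜 d a ha ha0 hf hg0mem hi
    have h2 : φ g / φ g0 ∈ Subfield.closure (F0 𝒜 ∪ {φ a}) :=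
      key 𝒜 d a ha ha0 hg hg0mem hi
    have heq : φ f / φ g = (φ f / φ g0) / (φ g / φ g0) := by
      field_simp
    rw [heq]
    exact div_mem h1 h2
end

section
/- Let M be a finitely generated abelian group, S an M-graded integral domain with fraction field 𝔽, and A ⊆ S any subset consisting of homogeneous elements. Then the subfield of 𝔽 generated by the degree-0 subfield 𝔽⁰ together with A equals 𝔽^{⟨deg A⟩}, the subfield of degree-0 elements with respect to the coarser grading by M/⟨deg A⟩, where ⟨deg A⟩ is the subgroup of M generated by degrees of elements of A. -/
/-!
Statement 1 (Lemma 2.2: 𝔽⁰(A) = 𝔽^{⟨deg A⟩}).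
For any subset A of homogeneous elements of an M-graded domain S (M finitely
generated abelian), the subfield of 𝔽 = Frac S generated by the degree-0 subfield 𝔽⁰
together with (the images of) A equals the degree-0 subfield for the coarser grading
by M ⧸ ⟨deg A⟩.
-/

variable {M : Type*} [AddCommGroup M] [DecidableEq M]
variable {S : Type*} [CommRing S] [IsDomain S]

set_option linter.unusedSectionVars false

lemma mem_coarse {𝒜 : M → AddSubgroup S} {M' : AddSubgroup M} {m m' : M}
    (hm' : m' ∈ M') {f : S} (hf : f ∈ 𝒜 (m + m')) :
    f ∈ coarsePiece 𝒜 M' m :=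
  (le_iSup₂ (f := fun m' (_ : m' ∈ M') => 𝒜 (m + m')) m' hm') hf

lemma mem_coarse_self {𝒜 : M → AddSubgroup S} {M' : AddSubgroup M} {m : M}
    {f : S} (hf : f ∈ 𝒜 m) : f ∈ coarsePiece 𝒜 M' m :=
  mem_coarse M'.zero_mem (by rwa [add_zero])

lemma coarse_induction {𝒜 : M → AddSubgroup S} {M' : AddSubgroup M} {m : M}
    {C : S → Prop} {x : S} (hx : x ∈ coarsePiece 𝒜 M' m)
    (mem : ∀ m' ∈ M', ∀ f ∈ 𝒜 (m + m'), C f) (zero : C 0)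
    (add : ∀ a b, C a → C b → C (a + b)) : C x := by
  rw [coarsePiece, iSup_subtype'] at hx
  exact AddSubgroup.iSup_induction (C := C) _ hx (fun i f hf => mem i i.2 f hf) zero add

lemma coarse_mul {𝒜 : M → AddSubgroup S} [GradedRing 𝒜] {M' : AddSubgroup M} {m1 m2 : M}
    {x y : S} (hx : x ∈ coarsePiece 𝒜 M' m1) (hy : y ∈ coarsePiece 𝒜 M' m2) :
    x * y ∈ coarsePiece 𝒜 M' (m1 + m2) := by
  refine coarse_induction (C := fun x => x * y ∈ coarsePiece 𝒜 M' (m1 + m2)) hx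
    (fun m1' h1 f hf => ?_) (by show (0:S) * y ∈ _; rw [zero_mul]; exact zero_mem _)
    (fun a b ha hb => by show (a + b) * y ∈ _; rw [add_mul]; exact add_mem ha hb)
  refine coarse_induction (C := fun y => f * y ∈ coarsePiece 𝒜 M' (m1 + m2)) hy
    (fun m2' h2 g hg => ?_) (by show f * (0:S) ∈ _; rw [mul_zero]; exact zero_mem _)
    (fun a b ha hb => by show f * (a + b) ∈ _; rw [mul_add]; exact add_mem ha hb)
  have := SetLike.mul_mem_graded hf hg
  rw [add_add_add_comm] at this
  exact mem_coarse (add_mem h1 h2) this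

set_option maxHeartbeats 1000000 in
theorem stmt1 [AddGroup.FG M] (𝒜 : M → AddSubgroup S) [GradedRing 𝒜]
    (A : Set S) (hA : ∀ a ∈ A, ∃ m, a ∈ 𝒜 m) :
    (Subfield.closure (F0 𝒜 ∪ (algebraMap S (FractionRing S)) '' A) :
        Set (FractionRing S)) =
      Fcoarse 𝒜 (AddSubgroup.closure {m : M | ∃ a ∈ A, a ≠ 0 ∧ a ∈ 𝒜 m}) := by
  set φ := algebraMap S (FractionRing S) with hφ
  set M' := AddSubgroup.closure {m : M | ∃ a ∈ A, a ≠ 0 ∧ a ∈ 𝒜 m} with hM'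
  set L := Subfield.closure (F0 𝒜 ∪ φ '' A) with hL
  have hφinj : Function.Injective φ := IsFractionRing.injective S (FractionRing S)
  have hφne : ∀ {s : S}, s ≠ 0 → φ s ≠ 0 := fun {s} hs h => hs (hφinj (by simpa using h))
  -- Step 1: ratios realizing each degree in M'
  have hQ : ∀ d ∈ M', ∃ (mu mv : M) (u v : S), u ∈ 𝒜 mu ∧ v ∈ 𝒜 mv ∧ u ≠ 0 ∧ v ≠ 0 ∧
      mu - mv = d ∧ φ u / φ v ∈ L := by
    intro d hd
    refine AddSubgroup.closure_induction
      (p := fun d _ => ∃ (mu mv : M) (u v : S), u ∈ 𝒜 mu ∧ v ∈ 𝒜 mv ∧ u ≠ 0 ∧ v ≠ 0 ∧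
        mu - mv = d ∧ φ u / φ v ∈ L) ?_ ?_ ?_ ?_ hd
    · rintro m ⟨a, haA, ha0, ham⟩
      show ∃ (mu mv : M) (u v : S), u ∈ 𝒜 mu ∧ v ∈ 𝒜 mv ∧ u ≠ 0 ∧ v ≠ 0 ∧
        mu - mv = m ∧ φ u / φ v ∈ L
      refine ⟨m, 0, a, 1, ham, SetLike.one_mem_graded _, ha0, one_ne_zero, by simp, ?_⟩
      have hmem : φ a ∈ L :=
        Subfield.subset_closure (Set.mem_union_right _ ⟨a, haA, rfl⟩)
      simpa using hmem
    · show ∃ (mu mv : M) (u v : S), u ∈ 𝒜 mu ∧ v ∈ 𝒜 mv ∧ u ≠ 0 ∧ v ≠ 0 ∧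
        mu - mv = 0 ∧ φ u / φ v ∈ L
      exact ⟨0, 0, 1, 1, SetLike.one_mem_graded _, SetLike.one_mem_graded _, one_ne_zero,
        one_ne_zero, by simp, by simpa using Subfield.one_mem L⟩
    · rintro d1 d2 _ _ ⟨m1, n1, u1, v1, hu1, hv1, hu1', hv1', hd1, hr1⟩
        ⟨m2, n2, u2, v2, hu2, hv2, hu2', hv2', hd2, hr2⟩
      refine ⟨m1 + m2, n1 + n2, u1 * u2, v1 * v2, SetLike.mul_mem_graded hu1 hu2,
        SetLike.mul_mem_graded hv1 hv2, mul_ne_zero hu1' hu2', mul_ne_zero hv1' hv2',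
        by rw [← hd1, ← hd2]; abel, ?_⟩
      rw [map_mul, map_mul, ← div_mul_div_comm]
      exact Subfield.mul_mem _ hr1 hr2
    · rintro d _ ⟨mu, mv, u, v, hu, hv, hu', hv', hd, hr⟩
      exact ⟨mv, mu, v, u, hv, hu, hv', hu', by rw [← hd]; abel,
        by rw [← inv_div]; exact Subfield.inv_mem _ hr⟩
  -- Step 2: fine homogeneous ratios of degree in M' lie in L
  have hfine : ∀ (mf mg : M) (f g : S), f ∈ 𝒜 mf → g ∈ 𝒜 mg → g ≠ 0 → mf - mg ∈ M' →
      φ f / φ g ∈ L := by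
    intro mf mg f g hf hg hg0 hmem
    obtain ⟨mu, mv, u, v, hu, hv, hu0, hv0, hd, hr⟩ := hQ _ hmem
    have heq : mg + mu = mf + mv := by
      have h := sub_eq_sub_iff_add_eq_add.mp hd
      rw [add_comm mg mu]; exact h
    have h1 : φ (f * v) / φ (g * u) ∈ L := by
      refine Subfield.subset_closure (Or.inl ⟨mf + mv, f * v, g * u,
        SetLike.mul_mem_graded hf hv, ?_, mul_ne_zero hg0 hu0, rfl⟩)
      rw [← heq]; exact SetLike.mul_mem_graded hg hu
    have key : φ f / φ g = (φ (f * v) / φ (g * u)) * (φ u / φ v) := by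
      have h1 := hφne hg0
      have h2 := hφne hu0
      have h3 := hφne hv0
      rw [map_mul, map_mul]
      field_simp
    rw [key]
    exact Subfield.mul_mem _ h1 hr
  -- Step 3: coarse numerator over fine homogeneous denominator
  have hcoarse : ∀ (m n : M) (f g₀ : S), f ∈ coarsePiece 𝒜 M' m → g₀ ∈ 𝒜 n → g₀ ≠ 0 →
      n - m ∈ M' → φ f / φ g₀ ∈ L := by
    intro m n f g₀ hf hg hg0 hnm
    refine coarse_induction (C := fun f => φ f / φ g₀ ∈ L) hf (fun m' hm' f hf => ?_) ?_ ?_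
    · refine hfine _ _ _ _ hf hg hg0 ?_
      have h : (m + m') - n = m' - (n - m) := by abel
      rw [h]; exact sub_mem hm' hnm
    · show φ 0 / φ g₀ ∈ L
      rw [map_zero, zero_div]; exact Subfield.zero_mem L
    · intro a b ha hb
      show φ (a + b) / φ g₀ ∈ L
      rw [map_add, add_div]; exact Subfield.add_mem _ ha hb
  -- Step 4: nonzero coarse elements have a nonzero fine component in the right coset
  have hexists : ∀ (m : M) (g : S), g ∈ coarsePiece 𝒜 M' m → g ≠ 0 →
      ∃ n g₀, g₀ ∈ 𝒜 n ∧ g₀ ≠ 0 ∧ n - m ∈ M' := by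
    intro m g hg hg0
    have h : g = 0 ∨ ∃ n g₀, g₀ ∈ 𝒜 n ∧ g₀ ≠ 0 ∧ n - m ∈ M' := by
      refine coarse_induction
        (C := fun g => g = 0 ∨ ∃ n g₀, g₀ ∈ 𝒜 n ∧ g₀ ≠ 0 ∧ n - m ∈ M') hg
        (fun m' hm' f hf => ?_) (Or.inl rfl) ?_
      · by_cases h : f = 0
        · exact Or.inl h
        · refine Or.inr ⟨m + m', f, hf, h, ?_⟩
          have he : (m + m') - m = m' := by abel
          rw [he]; exact hm'
      · rintro a b (rfl | ha) hb
        · simpa using hb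
        · exact Or.inr ha
    exact h.resolve_left hg0
  -- Step 5: Fcoarse ⊆ L
  have hsub2 : Fcoarse 𝒜 M' ⊆ (L : Set (FractionRing S)) := by
    rintro x ⟨m, f, g, hf, hg, hg0, rfl⟩
    obtain ⟨n, g₀, hg₀n, hg₀0, hnm⟩ := hexists m g hg hg0
    have h1 := hcoarse m n f g₀ hf hg₀n hg₀0 hnm
    have h2 := hcoarse m n g g₀ hg hg₀n hg₀0 hnm
    have key : φ f / φ g = (φ f / φ g₀) / (φ g / φ g₀) := by
      have hz1 := hφne hg0
      have hz2 := hφne hg₀0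
      field_simp
    rw [key]
    exact Subfield.div_mem _ h1 h2
  -- Step 6: L ⊆ Fcoarse, via Fcoarse being a subfield containing the generators
  have one_coarse : (1 : S) ∈ coarsePiece 𝒜 M' 0 := mem_coarse_self (SetLike.one_mem_graded 𝒜)
  let K : Subfield (FractionRing S) :=
    { carrier := Fcoarse 𝒜 M'
      one_mem' := ⟨0, 1, 1, one_coarse, one_coarse, one_ne_zero, by simp⟩
      zero_mem' := ⟨0, 0, 1, zero_mem _, one_coarse, one_ne_zero, by simp⟩
      mul_mem' := by
        rintro x y ⟨m1, f1, g1, hf1, hg1, hg10, rfl⟩ ⟨m2, f2, g2, hf2, hg2, hg20, rfl⟩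
        exact ⟨m1 + m2, f1 * f2, g1 * g2, coarse_mul hf1 hf2, coarse_mul hg1 hg2,
          mul_ne_zero hg10 hg20, by rw [map_mul, map_mul, ← div_mul_div_comm]⟩
      add_mem' := by
        rintro x y ⟨m1, f1, g1, hf1, hg1, hg10, rfl⟩ ⟨m2, f2, g2, hf2, hg2, hg20, rfl⟩
        refine ⟨m1 + m2, f1 * g2 + g1 * f2, g1 * g2, ?_, coarse_mul hg1 hg2,
          mul_ne_zero hg10 hg20, ?_⟩
        · refine add_mem (coarse_mul hf1 hg2) ?_
          have h := coarse_mul hg1 hf2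
          exact h
        · rw [map_add, map_mul, map_mul, map_mul]
          rw [div_add_div _ _ (hφne hg10) (hφne hg20)]
      neg_mem' := by
        rintro x ⟨m, f, g, hf, hg, hg0, rfl⟩
        exact ⟨m, -f, g, neg_mem hf, hg, hg0, by rw [map_neg, neg_div]⟩
      inv_mem' := by
        rintro x ⟨m, f, g, hf, hg, hg0, rfl⟩
        by_cases hf0 : f = 0
        · subst hf0
          exact ⟨m, 0, g, zero_mem _, hg, hg0, by simp⟩
        · exact ⟨m, g, f, hg, hf, hf0, by rw [inv_div]⟩ }
  have hsub1 : (L : Set (FractionRing S)) ⊆ Fcoarse 𝒜 M' := by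
    have hle : L ≤ K := by
      rw [hL]
      refine Subfield.closure_le.mpr ?_
      rintro x (⟨m, f, g, hf, hg, hg0, rfl⟩ | ⟨a, haA, rfl⟩)
      · show _ ∈ Fcoarse 𝒜 M'
        exact ⟨m, f, g, mem_coarse_self hf, mem_coarse_self hg, hg0, rfl⟩
      · by_cases ha0 : a = 0
        · subst ha0
          have h0 : φ (0 : S) = 0 := map_zero φ
          show φ (0 : S) ∈ Fcoarse 𝒜 M'
          rw [h0]
          exact K.zero_mem'
        · obtain ⟨m, ham⟩ := hA a haA
          show φ a ∈ Fcoarse 𝒜 M'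
          refine ⟨0, a, 1, ?_, one_coarse, one_ne_zero, by simp; rfl⟩
          have hmem : m ∈ M' := AddSubgroup.subset_closure
            (show m ∈ {m : M | ∃ a ∈ A, a ≠ 0 ∧ a ∈ 𝒜 m} from ⟨a, haA, ha0, ham⟩)
          refine mem_coarse (m := 0) hmem ?_
          rwa [zero_add]
    exact fun x hx => hle hx
  exact Set.Subset.antisymm hsub1 hsub2
end

section
/- Let M be a finitely generated abelian group, S an M-graded integral domain with fraction field 𝔽, and A ⊆ S a (possibly infinite) set of homogeneous elements. Then there exists a finite subset A' ⊆ A such that the field generated over 𝔽⁰ by A equals the field generated over 𝔽⁰ by A'. -/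
/-!
Statement 2 (Lemma 2.2, last part).  For any (possibly infinite) set A of homogeneous
elements of an M-graded domain S (M a finitely generated abelian group), there is a
finite subset A' ⊆ A such that the subfield of Frac S generated by the degree-0
subfield 𝔽⁰ and A equals the one generated by 𝔽⁰ and A'.
-/

variable {M : Type*} [AddCommGroup M] [DecidableEq M]
variable {S : Type*} [CommRing S] [IsDomain S]

theorem stmt2 [AddGroup.FG M] (𝒜 : M → AddSubgroup S) [GradedRing 𝒜]
    (A : Set S) (hA : ∀ a ∈ A, ∃ m, a ∈ 𝒜 m) :
    ∃ A' ⊆ A, A'.Finite ∧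
      Subfield.closure (F0 𝒜 ∪ (algebraMap S (FractionRing S)) '' A) =
        Subfield.closure (F0 𝒜 ∪ (algebraMap S (FractionRing S)) '' A') := by
  classical
  set K := FractionRing S
  set φ : S →+* K := algebraMap S K with hφ
  have hinj : Function.Injective φ := IsFractionRing.injective S K
  have hne : ∀ {s : S}, s ≠ 0 → φ s ≠ 0 := fun hs =>
    (map_ne_zero_iff φ hinj).mpr hs
  -- degree function
  set d : S → M := fun a => if h : ∃ m, a ∈ 𝒜 m then h.choose else 0 with hd
  have hdeg : ∀ a ∈ A, a ∈ 𝒜 (d a) := by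
    intro a ha
    have h : ∃ m, a ∈ 𝒜 m := hA a ha
    simp only [hd, dif_pos h]
    exact h.choose_spec
  -- set of degrees of nonzero elements of A
  set D : Set M := d '' {a | a ∈ A ∧ a ≠ 0} with hD
  -- the span of D is finitely generated
  haveI : Module.Finite ℤ M := Module.Finite.iff_addGroup_fg.mpr ‹_›
  haveI : IsNoetherian ℤ M := isNoetherian_of_isNoetherianRing_of_finite ℤ M
  obtain ⟨V, hV⟩ := IsNoetherian.noetherian (Submodule.span ℤ D)
  -- choose a finite subset T ⊆ D spanning the same submodule
  have hTsub : ∀ v ∈ V, ∃ T : Finset M, ↑T ⊆ D ∧ v ∈ Submodule.span ℤ (T : Set M) := by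
    intro v hv
    have : v ∈ Submodule.span ℤ D := by
      rw [← hV]; exact Submodule.subset_span hv
    exact Submodule.mem_span_finite_of_mem_span this
  choose Tf hTf1 hTf2 using hTsub
  set T : Finset M := V.attach.biUnion (fun v => Tf v.1 v.2) with hT
  have hTD : (T : Set M) ⊆ D := by
    intro t ht
    simp only [hT, Finset.coe_biUnion, Set.mem_iUnion] at ht
    obtain ⟨v, hv, htv⟩ := ht
    exact hTf1 v.1 v.2 htv
  have hDT : D ⊆ (Submodule.span ℤ (T : Set M) : Set M) := by
    intro x hx
    have hx' : x ∈ Submodule.span ℤ (V : Set M) := by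
      rw [hV]; exact Submodule.subset_span hx
    refine Submodule.span_le.mpr ?_ hx'
    intro v hv
    have : v ∈ Submodule.span ℤ ((Tf v hv : Finset M) : Set M) := hTf2 v hv
    refine Submodule.span_mono ?_ this
    intro t ht
    simp only [hT, Finset.coe_biUnion, Set.mem_iUnion]
    exact ⟨⟨v, hv⟩, V.mem_attach _, ht⟩
  -- choose witnesses for each degree in T
  set w : M → S := fun t =>
    if h : ∃ a, (a ∈ A ∧ a ≠ 0) ∧ d a = t then h.choose else 0 with hw
  have hwspec : ∀ t ∈ (T : Set M), w t ∈ A ∧ w t ≠ 0 ∧ w t ∈ 𝒜 t := by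
    intro t ht
    obtain ⟨a, ⟨haA, ha0⟩, hda⟩ := hTD ht
    have h : ∃ a, (a ∈ A ∧ a ≠ 0) ∧ d a = t := ⟨a, ⟨haA, ha0⟩, hda⟩
    simp only [hw, dif_pos h]
    obtain ⟨⟨h1, h2⟩, h3⟩ := h.choose_spec
    refine ⟨h1, h2, ?_⟩
    have := hdeg _ h1
    rwa [h3] at this
  set A' : Set S := w '' (T : Set M) with hA'
  have hA'A : A' ⊆ A := by
    rintro _ ⟨t, ht, rfl⟩; exact (hwspec t ht).1
  refine ⟨A', hA'A, (T.finite_toSet.image w), le_antisymm ?_ ?_⟩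
  swap
  · exact Subfield.closure_mono (Set.union_subset_union_right _ (Set.image_mono hA'A))
  set K' := Subfield.closure (F0 𝒜 ∪ φ '' A') with hK'
  -- key claim by induction on the closure of T
  have key : ∀ m ∈ AddSubgroup.closure (T : Set M),
      ∃ (p q : S) (e : M), p ∈ 𝒜 (e + m) ∧ q ∈ 𝒜 e ∧ p ≠ 0 ∧ q ≠ 0 ∧ φ p / φ q ∈ K' := by
    intro m hm
    induction hm using AddSubgroup.closure_induction with
    | mem t ht =>
      obtain ⟨h1, h2, h3⟩ := hwspec t ht
      refine ⟨w t, 1, 0, by simpa using h3, SetLike.one_mem_graded 𝒜, h2, one_ne_zero, ?_⟩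
      rw [map_one, div_one]
      exact Subfield.subset_closure (Or.inr ⟨w t, ⟨t, ht, rfl⟩, rfl⟩)
    | zero =>
      refine ⟨1, 1, 0, by simpa using SetLike.one_mem_graded 𝒜,
        SetLike.one_mem_graded 𝒜, one_ne_zero, one_ne_zero, ?_⟩
      rw [map_one, div_one]
      exact one_mem K'
    | add x y hx hy ihx ihy =>
      obtain ⟨p₁, q₁, e₁, hp₁, hq₁, hp₁0, hq₁0, h₁⟩ := ihx
      obtain ⟨p₂, q₂, e₂, hp₂, hq₂, hp₂0, hq₂0, h₂⟩ := ihy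
      refine ⟨p₁ * p₂, q₁ * q₂, e₁ + e₂, ?_, SetLike.mul_mem_graded hq₁ hq₂,
        mul_ne_zero hp₁0 hp₂0, mul_ne_zero hq₁0 hq₂0, ?_⟩
      · have := SetLike.mul_mem_graded hp₁ hp₂
        rwa [add_add_add_comm] at this
      · rw [map_mul, map_mul, ← div_mul_div_comm]
        exact mul_mem h₁ h₂
    | neg x hx ihx =>
      obtain ⟨p, q, e, hp, hq, hp0, hq0, h⟩ := ihx
      refine ⟨q, p, e + x, ?_, hp, hq0, hp0, ?_⟩
      · rwa [add_neg_cancel_right]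
      · rw [← inv_div]
        exact inv_mem h
  -- conclude
  rw [Subfield.closure_le]
  rintro x (hx | ⟨a, ha, rfl⟩)
  · exact Subfield.subset_closure (Or.inl hx)
  by_cases ha0 : a = 0
  · subst ha0; rw [map_zero]; exact zero_mem K'
  have hmem : d a ∈ AddSubgroup.closure (T : Set M) := by
    have : d a ∈ Submodule.span ℤ (T : Set M) := hDT ⟨a, ⟨ha, ha0⟩, rfl⟩
    rw [← Submodule.span_int_eq_addSubgroupClosure]
    exact this
  obtain ⟨p, q, e, hp, hq, hp0, hq0, hpq⟩ := key _ hmem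
  have hF0 : φ (a * q) / φ p ∈ F0 𝒜 := by
    refine ⟨e + d a, a * q, p, ?_, hp, hp0, rfl⟩
    have := SetLike.mul_mem_graded (hdeg a ha) hq
    rwa [add_comm] at this
  have heq : φ (a * q) / φ p * (φ p / φ q) = φ a := by
    rw [map_mul, div_mul_div_comm, div_eq_iff (mul_ne_zero (hne hp0) (hne hq0))]
    ring
  rw [← heq]
  exact mul_mem (Subfield.subset_closure (Or.inl hF0)) hpq
end

section
/- Let Φ : X̄ ⊸ Ȳ be a multi-valued map with associated ring homomorphisms p_Φ* : S[X][g⁻¹] → Γ(Φ) (inclusion) and q_Φ* = Φ* : S[Y] → Γ(Φ), where Γ(Φ) is the subring of closure(S(X)) generated by S[X][g⁻¹] and Φ*(S[Y]). Then p_Φ : Spec Γ(Φ) → Reg Φ is a finite morphism, and consequently for every closed subset W ⊆ Ȳ, the preimage Φ⁻¹(W) := p_Φ(q_Φ⁻¹(W)) is closed in Reg Φ. -/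
theorem stmt9 {A Ω B : Type*} [CommRing A] [IsDomain A] [Field Ω] [Algebra A Ω]
    (hinj : Function.Injective (algebraMap A Ω))
    {N : ℕ} (z : Fin N → Ω)
    (hz : ∀ i, ∃ r : ℕ, 0 < r ∧ z i ^ r ∈ (algebraMap A Ω).range)
    [CommRing B] (φ : B →+* (Algebra.adjoin A (Set.range z))) :
    Module.Finite A (Algebra.adjoin A (Set.range z)) ∧
    IsClosedMap (PrimeSpectrum.comap (algebraMap A (Algebra.adjoin A (Set.range z)))) ∧
    ∀ W : Set (PrimeSpectrum B), IsClosed W →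
      IsClosed (PrimeSpectrum.comap (algebraMap A (Algebra.adjoin A (Set.range z))) ''
        (PrimeSpectrum.comap φ ⁻¹' W)) := by
  have hint : ∀ x ∈ Set.range z, IsIntegral A x := by
    rintro x ⟨i, rfl⟩
    obtain ⟨r, hr, a, ha⟩ := hz i
    exact IsIntegral.of_pow hr (ha ▸ isIntegral_algebraMap)
  have hfin : Module.Finite A (Algebra.adjoin A (Set.range z)) := by
    have := fg_adjoin_of_finite (Set.finite_range z) hint
    exact Module.Finite.iff_fg.mpr this
  have hIntAlg : Algebra.IsIntegral A (Algebra.adjoin A (Set.range z)) :=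
    Algebra.IsIntegral.of_finite A _
  have hclosed : IsClosedMap
      (PrimeSpectrum.comap (algebraMap A (Algebra.adjoin A (Set.range z)))) :=
    PrimeSpectrum.isClosedMap_comap_of_isIntegral _ (fun x => hIntAlg.isIntegral x)
  refine ⟨hfin, hclosed, fun W hW => ?_⟩
  exact hclosed _ (hW.preimage (PrimeSpectrum.continuous_comap φ))
end
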